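/- In the two-qubit system with agents Alice and Bob, commands {R_x(θ), CNOT}, initial state |00⟩⟨00|, where Alice's R_x(θ) applies R_x(θ) ⊗ I, Bob's R_x(θ) applies I ⊗ R_x(θ), both agents' CNOT applies the controlled-NOT with the first qubit as control and the second as target, Alice's POVM set contains only the computational-basis measurement on the first qubit, and Bob's contains only the computational-basis measurement on the second qubit: Bob with the command R_x(θ) does not interfere with Alice, i.e. Int({Bob}, {R_x(θ)} | {Alice}) = 0; equivalently, for every finite action sequence α, d_Alice(𝓔_α(ρ0), 𝓔_{purge_{{Bob},{R_x(θ)}}(α)}(ρ0)) = 0. -/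

import Mathlib

open scoped Classical ComplexOrder
open Matrix Kronecker

noncomputable section

/-- A density operator: positive semidefinite with trace 1. -/
def IsDensity {d : Type} [Fintype d] [DecidableEq d] (ρ : Matrix d d ℂ) : Prop :=
  ρ.PosSemidef ∧ ρ.trace = 1

/-- A super-operator: a linear, positive, trace-preserving map on matrices. -/
def IsSuperOp {d : Type} [Fintype d] [DecidableEq d]
    (F : Matrix d d ℂ → Matrix d d ℂ) : Prop :=
  IsLinearMap ℂ F ∧ (∀ ρ : Matrix d d ℂ, ρ.PosSemidef → (F ρ).PosSemidef) ∧
    (∀ ρ : Matrix d d ℂ, (F ρ).trace = ρ.trace)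

/-- A finite family of matrices (the data of a measurement). -/
structure PMeas (d : Type) where
  m : ℕ
  E : Fin m → Matrix d d ℂ

/-- The family is a POVM: positive semidefinite elements summing to the identity. -/
def PMeas.IsPOVM {d : Type} [Fintype d] [DecidableEq d] (P : PMeas d) : Prop :=
  (∀ i, (P.E i).PosSemidef) ∧ ∑ i, P.E i = 1

/-- The distance between outcome distributions of a measurement on two states. -/
def dE {d : Type} [Fintype d] (P : PMeas d) (ρ σ : Matrix d d ℂ) : ℝ :=
  (1 / 2) * ∑ i, ‖(P.E i * ρ).trace - (P.E i * σ).trace‖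

/-- The measurement pseudo-distance induced by a set of measurements. -/
def dM {d : Type} [Fintype d] (M : Set (PMeas d)) (ρ σ : Matrix d d ℂ) : ℝ :=
  sSup { x | ∃ P ∈ M, x = dE P ρ σ }

/-- A quantum system: initial state, agents, commands, super-operators, measurements. -/
structure QSystem (Agent Cmd d : Type) where
  ρ0 : Matrix d d ℂ
  A : Set Agent
  C : Set Cmd
  Ecmd : Agent → Cmd → Matrix d d ℂ → Matrix d d ℂ
  M : Agent → Set (PMeas d)

/-- Well-formedness: the initial state is a density operator, commands act as
super-operators, and agents measure with POVMs. -/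
def QSystem.WellFormed {Agent Cmd d : Type} [Fintype d] [DecidableEq d]
    (S : QSystem Agent Cmd d) : Prop :=
  IsDensity S.ρ0 ∧ (∀ a ∈ S.A, ∀ c ∈ S.C, IsSuperOp (S.Ecmd a c)) ∧
    (∀ a ∈ S.A, ∀ P ∈ S.M a, P.IsPOVM)

/-- Execution of a finite action sequence (composition of super-operators, in order). -/
def QSystem.run {Agent Cmd d : Type} (S : QSystem Agent Cmd d)
    (α : List (Agent × Cmd)) (ρ : Matrix d d ℂ) : Matrix d d ℂ :=
  α.foldl (fun τ p => S.Ecmd p.1 p.2 τ) ρ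

/-- A sequence over A × C. -/
def QSystem.Valid {Agent Cmd d : Type} (S : QSystem Agent Cmd d)
    (α : List (Agent × Cmd)) : Prop :=
  ∀ p ∈ α, p.1 ∈ S.A ∧ p.2 ∈ S.C

/-- `purge G D α` deletes from `α` every pair `(a, c)` with `a ∈ G` and `c ∈ D`. -/
def purge {Agent Cmd : Type} (G : Set Agent) (D : Set Cmd) :
    List (Agent × Cmd) → List (Agent × Cmd)
  | [] => []
  | p :: rest => if p.1 ∈ G ∧ p.2 ∈ D then purge G D rest else p :: purge G D rest

/-- A reachable density operator. -/
def QSystem.Reachable {Agent Cmd d : Type} (S : QSystem Agent Cmd d)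
    (ρ : Matrix d d ℂ) : Prop :=
  ∃ α, S.Valid α ∧ S.run α S.ρ0 = ρ

/-- `∇ a`: the set of agents from which information may not flow to `a`. -/
def nabla {Agent : Type} (pol : Agent → Agent → Prop) (a : Agent) : Set Agent :=
  { b | ¬ pol b a }

/-- The security degree `K(𝕊,↝)`. -/
def Kdeg {Agent Cmd d : Type} [Fintype d] (S : QSystem Agent Cmd d)
    (pol : Agent → Agent → Prop) : ℝ :=
  sSup { x | ∃ a ∈ S.A, ∃ α, S.Valid α ∧
    x = dM (S.M a) (S.run α S.ρ0) (S.run (purge (nabla pol a) Set.univ α) S.ρ0) }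

/-- The `t`-bounded security degree `K_t(𝕊,↝)`. -/
def Kt {Agent Cmd d : Type} [Fintype d] (S : QSystem Agent Cmd d)
    (pol : Agent → Agent → Prop) (t : ℕ) : ℝ :=
  sSup { x | ∃ a ∈ S.A, ∃ α, S.Valid α ∧ α.length ≤ t ∧
    x = dM (S.M a) (S.run α S.ρ0) (S.run (purge (nabla pol a) Set.univ α) S.ρ0) }

/-- The interference degree `Int(G₁, D | G₂)`. -/
def IntDeg {Agent Cmd d : Type} [Fintype d] (S : QSystem Agent Cmd d)
    (G1 : Set Agent) (D : Set Cmd) (G2 : Set Agent) : ℝ :=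
  sSup { x | ∃ a ∈ G2, ∃ α, S.Valid α ∧
    x = dM (S.M a) (S.run α S.ρ0) (S.run (purge G1 D α) S.ρ0) }

/-- Trace distance `d(ρ,σ) = (1/2)·tr √((ρ−σ)†(ρ−σ))`. -/
def traceDist {d : Type} [Fintype d] [DecidableEq d] (ρ σ : Matrix d d ℂ) : ℝ :=
  (1 / 2) * (((Matrix.posSemidef_conjTranspose_mul_self (ρ - σ)).1.eigenvectorUnitary.1 *
    Matrix.diagonal (((↑) : ℝ → ℂ) ∘ (Real.sqrt ·) ∘
      (Matrix.posSemidef_conjTranspose_mul_self (ρ - σ)).1.eigenvalues) *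
    (star (Matrix.posSemidef_conjTranspose_mul_self (ρ - σ)).1.eigenvectorUnitary :
      Matrix d d ℂ)).trace).re

end
noncomputable section

/-- The two agents Alice and Bob. -/
inductive Ag : Type
  | alice : Ag
  | bob : Ag
deriving DecidableEq

/-- The two commands: the rotation `R_x(θ)` and the controlled-NOT. -/
inductive Cm : Type
  | rx : Cm
  | cnot : Cm
deriving DecidableEq

/-- The rotation about the x-axis of the Bloch sphere. -/
def Rx (θ : ℝ) : Matrix (Fin 2) (Fin 2) ℂ :=
  !![(Real.cos (θ / 2) : ℂ), -Complex.I * (Real.sin (θ / 2) : ℂ);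
     -Complex.I * (Real.sin (θ / 2) : ℂ), (Real.cos (θ / 2) : ℂ)]

/-- The controlled-NOT gate with the first qubit as control: `|i,k⟩ ↦ |i, k + i⟩`. -/
def CNOT : Matrix (Fin 2 × Fin 2) (Fin 2 × Fin 2) ℂ :=
  Matrix.of fun p q => if p.1 = q.1 ∧ p.2 = q.2 + q.1 then 1 else 0

/-- The super-operator `ρ ↦ U ρ U†` of a unitary `U`. -/
def conjOp {d : Type} [Fintype d] (U : Matrix d d ℂ) :
    Matrix d d ℂ → Matrix d d ℂ :=
  fun ρ => U * ρ * Uᴴ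

/-- The projection `|i⟩⟨i|` on one qubit. -/
def proj (i : Fin 2) : Matrix (Fin 2) (Fin 2) ℂ := Matrix.single i i 1

/-- The computational-basis measurement on the first qubit. -/
def measFst : PMeas (Fin 2 × Fin 2) where
  m := 2
  E := fun i => proj i ⊗ₖ (1 : Matrix (Fin 2) (Fin 2) ℂ)

/-- The computational-basis measurement on the second qubit. -/
def measSnd : PMeas (Fin 2 × Fin 2) where
  m := 2
  E := fun i => (1 : Matrix (Fin 2) (Fin 2) ℂ) ⊗ₖ proj i

/-- The basis vector `|00⟩` of the two-qubit space. -/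
def ket00 : (Fin 2 × Fin 2) → ℂ := fun p => if p = (0, 0) then 1 else 0

/-- The two-qubit system of Example 3.1: initial state `|00⟩⟨00|`; Alice's `R_x(θ)`
acts on the first qubit, Bob's on the second; both agents' CNOT has the first qubit as
control and the second as target; Alice measures the first qubit in the computational
basis, Bob the second. -/
def twoQubitSys (θ : ℝ) : QSystem Ag Cm (Fin 2 × Fin 2) where
  ρ0 := Matrix.vecMulVec ket00 (star ket00)
  A := Set.univ
  C := Set.univ
  Ecmd := fun a c =>
    match a, c with
    | Ag.alice, Cm.rx => conjOp (Rx θ ⊗ₖ (1 : Matrix (Fin 2) (Fin 2) ℂ))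
    | Ag.bob, Cm.rx => conjOp ((1 : Matrix (Fin 2) (Fin 2) ℂ) ⊗ₖ Rx θ)
    | _, Cm.cnot => conjOp CNOT
  M := fun a =>
    match a with
    | Ag.alice => {measFst}
    | Ag.bob => {measSnd}

end
noncomputable section

/-- Bob's rotation as a 4×4 unitary. -/
def Ub (θ : ℝ) : Matrix (Fin 2 × Fin 2) (Fin 2 × Fin 2) ℂ :=
  (1 : Matrix (Fin 2) (Fin 2) ℂ) ⊗ₖ Rx θ

lemma Rx_unitary (θ : ℝ) : (Rx θ)ᴴ * Rx θ = 1 := by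
  ext i j
  fin_cases i <;> fin_cases j <;>
    simp [Rx, Matrix.mul_apply, Fin.sum_univ_two, Complex.ext_iff,
      -Complex.ofReal_cos, -Complex.ofReal_sin] <;>
    nlinarith [Real.sin_sq_add_cos_sq (θ/2)]

lemma Ub_unitary (θ : ℝ) : (Ub θ)ᴴ * Ub θ = 1 := by
  have h : (Ub θ)ᴴ = (1 : Matrix (Fin 2) (Fin 2) ℂ) ⊗ₖ (Rx θ)ᴴ := by
    ext ⟨i,k⟩ ⟨j,l⟩
    by_cases h : i = j
    · subst h; simp [Ub, Matrix.conjTranspose_apply, Matrix.one_apply]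
    · simp [Ub, Matrix.conjTranspose_apply, Matrix.one_apply, h, Ne.symm h]
  rw [h, Ub, ← Matrix.mul_kronecker_mul, Rx_unitary]
  simp [Matrix.one_kronecker_one]

lemma Ub_comm_alice (θ : ℝ) :
    (Rx θ ⊗ₖ (1 : Matrix (Fin 2) (Fin 2) ℂ)) * Ub θ = Ub θ * (Rx θ ⊗ₖ 1) := by
  simp [Ub, ← Matrix.mul_kronecker_mul]

lemma Ub_comm_cnot (θ : ℝ) : CNOT * Ub θ = Ub θ * CNOT := by
  ext ⟨i,k⟩ ⟨j,l⟩
  simp only [Matrix.mul_apply, Fintype.sum_prod_type, Fin.sum_univ_two]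
  fin_cases i <;> fin_cases k <;> fin_cases j <;> fin_cases l <;>
    simp [CNOT, Ub, Rx, Matrix.one_apply]

lemma Ub_comm_proj (θ : ℝ) (i : Fin 2) :
    (proj i ⊗ₖ (1 : Matrix (Fin 2) (Fin 2) ℂ)) * Ub θ = Ub θ * (proj i ⊗ₖ 1) := by
  simp [Ub, ← Matrix.mul_kronecker_mul]

lemma conjOp_comm {U V : Matrix (Fin 2 × Fin 2) (Fin 2 × Fin 2) ℂ}
    (h : V * U = U * V) (σ : Matrix (Fin 2 × Fin 2) (Fin 2 × Fin 2) ℂ) :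
    conjOp V (conjOp U σ) = conjOp U (conjOp V σ) := by
  have h' : Uᴴ * Vᴴ = Vᴴ * Uᴴ := by
    rw [← Matrix.conjTranspose_mul, ← Matrix.conjTranspose_mul, h]
  simp only [conjOp]
  calc V * (U * σ * Uᴴ) * Vᴴ
      = (V * U) * σ * (Uᴴ * Vᴴ) := by simp only [Matrix.mul_assoc]
    _ = (U * V) * σ * (Vᴴ * Uᴴ) := by rw [h, h']
    _ = U * (V * σ * Vᴴ) * Uᴴ := by simp only [Matrix.mul_assoc]

lemma Ecmd_comm (θ : ℝ) (a : Ag) (c : Cm) (σ : Matrix (Fin 2 × Fin 2) (Fin 2 × Fin 2) ℂ) :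
    (twoQubitSys θ).Ecmd a c (conjOp (Ub θ) σ) = conjOp (Ub θ) ((twoQubitSys θ).Ecmd a c σ) := by
  cases a <;> cases c
  · exact conjOp_comm (Ub_comm_alice θ) σ
  · exact conjOp_comm (Ub_comm_cnot θ) σ
  · exact conjOp_comm rfl σ
  · exact conjOp_comm (Ub_comm_cnot θ) σ

lemma run_conj (θ : ℝ) (α : List (Ag × Cm)) :
    ∀ σ, (twoQubitSys θ).run α (conjOp (Ub θ) σ) = conjOp (Ub θ) ((twoQubitSys θ).run α σ) := by
  induction α with
  | nil => intro σ; rfl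
  | cons p rest ih =>
    intro σ
    show (twoQubitSys θ).run rest ((twoQubitSys θ).Ecmd p.1 p.2 (conjOp (Ub θ) σ)) = _
    rw [Ecmd_comm]
    exact ih _

lemma run_purge (θ : ℝ) (α : List (Ag × Cm)) :
    ∀ σ, ∃ k : ℕ, (twoQubitSys θ).run α σ =
      (conjOp (Ub θ))^[k] ((twoQubitSys θ).run (purge {Ag.bob} {Cm.rx} α) σ) := by
  induction α with
  | nil => intro σ; exact ⟨0, rfl⟩
  | cons p rest ih =>
    intro σ
    by_cases h : p.1 ∈ ({Ag.bob} : Set Ag) ∧ p.2 ∈ ({Cm.rx} : Set Cm)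
    · obtain ⟨k, hk⟩ := ih σ
      refine ⟨k + 1, ?_⟩
      have hpu : purge {Ag.bob} {Cm.rx} (p :: rest) = purge {Ag.bob} {Cm.rx} rest := by
        rw [purge, if_pos h]
      rw [hpu]
      have hp : (twoQubitSys θ).Ecmd p.1 p.2 σ = conjOp (Ub θ) σ := by
        obtain ⟨a, c⟩ := p
        simp only [Set.mem_singleton_iff] at h
        rw [h.1, h.2]; rfl
      show (twoQubitSys θ).run rest ((twoQubitSys θ).Ecmd p.1 p.2 σ) = _
      rw [hp, run_conj, hk, Function.iterate_succ_apply']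
    · obtain ⟨k, hk⟩ := ih ((twoQubitSys θ).Ecmd p.1 p.2 σ)
      refine ⟨k, ?_⟩
      have hpu : purge {Ag.bob} {Cm.rx} (p :: rest) = p :: purge {Ag.bob} {Cm.rx} rest := by
        rw [purge, if_neg h]
      rw [hpu]
      exact hk

lemma trace_conj (θ : ℝ) (P : Matrix (Fin 2 × Fin 2) (Fin 2 × Fin 2) ℂ)
    (hP : P * Ub θ = Ub θ * P) (τ : Matrix (Fin 2 × Fin 2) (Fin 2 × Fin 2) ℂ) :
    (P * conjOp (Ub θ) τ).trace = (P * τ).trace := by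
  simp only [conjOp, ← Matrix.mul_assoc]
  rw [hP, Matrix.mul_assoc (Ub θ), Matrix.mul_assoc (Ub θ), Matrix.trace_mul_comm,
    Matrix.mul_assoc (P * τ), Ub_unitary, Matrix.mul_one]

lemma trace_iter (θ : ℝ) (P : Matrix (Fin 2 × Fin 2) (Fin 2 × Fin 2) ℂ)
    (hP : P * Ub θ = Ub θ * P) (k : ℕ) :
    ∀ τ, (P * (conjOp (Ub θ))^[k] τ).trace = (P * τ).trace := by
  induction k with
  | zero => intro τ; rfl
  | succ k ih =>
    intro τ
    rw [Function.iterate_succ_apply', trace_conj θ P hP, ih]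

lemma dE_zero (θ : ℝ) (α : List (Ag × Cm)) :
    dE measFst ((twoQubitSys θ).run α (twoQubitSys θ).ρ0)
      ((twoQubitSys θ).run (purge {Ag.bob} {Cm.rx} α) (twoQubitSys θ).ρ0) = 0 := by
  obtain ⟨k, hk⟩ := run_purge θ α (twoQubitSys θ).ρ0
  rw [hk]
  simp only [dE]
  have h : ∀ i : Fin measFst.m,
      (measFst.E i * (conjOp (Ub θ))^[k]
        ((twoQubitSys θ).run (purge {Ag.bob} {Cm.rx} α) (twoQubitSys θ).ρ0)).trace =
      (measFst.E i * ((twoQubitSys θ).run (purge {Ag.bob} {Cm.rx} α) (twoQubitSys θ).ρ0)).trace :=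
    fun i => trace_iter θ (measFst.E i) (Ub_comm_proj θ i) k _
  simp [h]

lemma dM_singleton {d : Type} [Fintype d] (P : PMeas d) (ρ σ : Matrix d d ℂ) :
    dM {P} ρ σ = dE P ρ σ := by
  have : {x | ∃ Q ∈ ({P} : Set (PMeas d)), x = dE Q ρ σ} = {dE P ρ σ} := by
    ext x; simp
  rw [dM, this, csSup_singleton]

/-- **Claim 1 of Example 3.1.** In the two-qubit system, Bob with the command `R_x(θ)`
does not interfere with Alice: `Int({Bob}, {R_x(θ)} | {Alice}) = 0`; equivalently, for
every finite action sequence `α`,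
`d_Alice(𝓔_α(ρ0), 𝓔_{purge_{{Bob},{R_x(θ)}}(α)}(ρ0)) = 0`. -/
theorem bob_rx_noninterference_with_alice (θ : ℝ) :
    IntDeg (twoQubitSys θ) {Ag.bob} {Cm.rx} {Ag.alice} = 0 ∧
    ∀ α : List (Ag × Cm),
      dM ((twoQubitSys θ).M Ag.alice)
        ((twoQubitSys θ).run α (twoQubitSys θ).ρ0)
        ((twoQubitSys θ).run (purge {Ag.bob} {Cm.rx} α) (twoQubitSys θ).ρ0) = 0 := by
  have h2 : ∀ α : List (Ag × Cm),
      dM ((twoQubitSys θ).M Ag.alice)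
        ((twoQubitSys θ).run α (twoQubitSys θ).ρ0)
        ((twoQubitSys θ).run (purge {Ag.bob} {Cm.rx} α) (twoQubitSys θ).ρ0) = 0 := by
    intro α
    show dM {measFst} _ _ = 0
    rw [dM_singleton, dE_zero]
  refine ⟨?_, h2⟩
  have hset : {x | ∃ a ∈ ({Ag.alice} : Set Ag), ∃ α, (twoQubitSys θ).Valid α ∧
      x = dM ((twoQubitSys θ).M a) ((twoQubitSys θ).run α (twoQubitSys θ).ρ0)
        ((twoQubitSys θ).run (purge {Ag.bob} {Cm.rx} α) (twoQubitSys θ).ρ0)} = {0} := by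
    ext x
    show (∃ a ∈ ({Ag.alice} : Set Ag), _) ↔ x = 0
    constructor
    · rintro ⟨a, ha, α, hv, rfl⟩
      simp only [Set.mem_singleton_iff] at ha
      subst ha
      exact h2 α
    · rintro rfl
      exact ⟨Ag.alice, rfl, [], fun p hp => absurd hp List.not_mem_nil, (h2 []).symm⟩
  rw [IntDeg, hset, csSup_singleton]

end
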